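/- arXiv:2507.10289 — 7 statements merged into one kernel-verified Lean document; each statement's English description precedes it below -/
import Mathlib

section
/- Let L : F^d → F^d be a linear bijection that is either a Euclidean similarity or a Poincaré similarity. Then the following are equivalent: (i) L[S₀] ⊆ S₀; (ii) L[S₀] = S₀; (iii) L[T] ⊆ T; (iv) L[T] = T. -/
namespace Spacetimes

open Finset

variable {F : Type*} [Field F] [LinearOrder F] [IsStrictOrderedRing F] {d : ℕ}

/-- The Euclidean scalar product on `Fin d → F`. -/
def euclProd (p q : Fin d → F) : F := ∑ i, p i * q i

/-- The Minkowski product on `Fin d → F`; index `0` is the time coordinate. -/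
def minkProd [NeZero d] (p q : Fin d → F) : F :=
  p 0 * q 0 - ∑ i ∈ Finset.univ.erase (0 : Fin d), p i * q i

/-- The squared distance function associated to a product `B`. -/
def sqDist (B : (Fin d → F) → (Fin d → F) → F) (p q : Fin d → F) : F :=
  B (p - q) (p - q)

/-- An affine transformation: a linear bijection composed with a translation. -/
def IsAffine (A : (Fin d → F) → (Fin d → F)) : Prop :=
  ∃ (L : (Fin d → F) ≃ₗ[F] (Fin d → F)) (t : Fin d → F), ∀ p, A p = L p + t

/-- A Euclidean similarity: an affine transformation scaling squared
Euclidean distances by a constant factor. -/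
def EuclSim (A : (Fin d → F) → (Fin d → F)) : Prop :=
  IsAffine A ∧ ∃ a : F, ∀ p q : Fin d → F,
    sqDist euclProd (A p) (A q) = a * sqDist euclProd p q

/-- A Poincaré similarity: an affine transformation scaling squared
Minkowski distances by a constant factor. -/
def PoiSim [NeZero d] (A : (Fin d → F) → (Fin d → F)) : Prop :=
  IsAffine A ∧ ∃ a : F, ∀ p q : Fin d → F,
    sqDist minkProd (A p) (A q) = a * sqDist minkProd p q

/-- A Galilean similarity. -/
def GalSim [NeZero d] (A : (Fin d → F) → (Fin d → F)) : Prop :=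
  IsAffine A ∧ ∃ a : F, ∀ p q : Fin d → F, p 0 = q 0 →
    A p 0 = A q 0 ∧ sqDist euclProd (A p) (A q) = a * sqDist euclProd p q

/-- A map respects a binary relation. -/
def Respects2 {α : Type*} (f : α → α) (R : α → α → Prop) : Prop :=
  ∀ p q, R p q ↔ R (f p) (f q)

/-- A map respects a ternary relation. -/
def Respects3 {α : Type*} (f : α → α) (R : α → α → α → Prop) : Prop :=
  ∀ p q r, R p q r ↔ R (f p) (f q) (f r)

/-- A map respects a 4-ary relation. -/
def Respects4 {α : Type*} (f : α → α) (R : α → α → α → α → Prop) : Prop :=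
  ∀ p q r s, R p q r s ↔ R (f p) (f q) (f r) (f s)

/-- Absolute simultaneity. -/
def SimRel [NeZero d] (p q : Fin d → F) : Prop := p 0 = q 0

/-- Being at rest (same spatial components). -/
def RestRel [NeZero d] (p q : Fin d → F) : Prop := ∀ i, i ≠ 0 → p i = q i

/-- A trivial Euclidean similarity: a Euclidean similarity respecting `RestRel`. -/
def TrivEuclSim [NeZero d] (A : (Fin d → F) → (Fin d → F)) : Prop :=
  EuclSim A ∧ Respects2 A RestRel

/-- A trivial Galilean similarity: a Galilean similarity respecting `RestRel`. -/
def TrivGalSim [NeZero d] (A : (Fin d → F) → (Fin d → F)) : Prop :=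
  GalSim A ∧ Respects2 A RestRel

/-- Betweenness. -/
def Bw (p q r : Fin d → F) : Prop :=
  ∃ l : F, 0 ≤ l ∧ l ≤ 1 ∧ q = p + l • (r - p)

/-- Lightlike relatedness. -/
def Light [NeZero d] (p q : Fin d → F) : Prop :=
  (p 0 - q 0) ^ 2 = ∑ i ∈ Finset.univ.erase (0 : Fin d), (p i - q i) ^ 2

/-- Euclidean congruence of segments. -/
def CongE (p q r s : Fin d → F) : Prop :=
  sqDist euclProd p q = sqDist euclProd r s

/-- Minkowski congruence of segments. -/
def CongM [NeZero d] (p q r s : Fin d → F) : Prop :=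
  sqDist minkProd p q = sqDist minkProd r s

/-- Congruence on simultaneity. -/
def CongS [NeZero d] (p q r s : Fin d → F) : Prop :=
  CongE p q r s ∧ SimRel p q ∧ SimRel r s

/-- The time axis. -/
def timeAxis (F : Type*) [Field F] [LinearOrder F] [IsStrictOrderedRing F] (d : ℕ) [NeZero d] :
    Set (Fin d → F) := {p | ∀ i, i ≠ 0 → p i = 0}

/-- The simultaneity at the origin. -/
def simul0 (F : Type*) [Field F] [LinearOrder F] [IsStrictOrderedRing F] (d : ℕ) [NeZero d] :
    Set (Fin d → F) := {p | p 0 = 0}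

/-- The `i`-th standard unit vector. -/
def unitVec (F : Type*) [Field F] [LinearOrder F] [IsStrictOrderedRing F] {d : ℕ} (i : Fin d) : Fin d → F :=
  Pi.single i 1

section Auxiliary

variable [NeZero d]

lemma unitVec_apply (i j : Fin d) : unitVec F i j = if j = i then 1 else 0 := by
  simp [unitVec, Pi.single_apply]

lemma mem_timeAxis_iff_eq {p : Fin d → F} :
    p ∈ timeAxis F d ↔ p = p 0 • unitVec F 0 := by
  constructor
  · intro h
    funext i
    by_cases hi : i = 0
    · subst hi; simp [unitVec_apply]
    · simp [timeAxis] at h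
      simp [h i hi, unitVec_apply, hi]
  · intro h i hi
    have hpi := congrFun h i
    rw [hpi]
    simp [unitVec_apply, hi]

lemma unitVec_zero_mem_timeAxis : unitVec F 0 ∈ timeAxis F d := by
  intro i hi; simp [unitVec_apply, hi]

lemma image_timeAxis_eq (L : (Fin d → F) ≃ₗ[F] (Fin d → F))
    (h : ⇑L '' timeAxis F d ⊆ timeAxis F d) :
    ⇑L '' timeAxis F d = timeAxis F d := by
  have hLe0 : L (unitVec F 0) ∈ timeAxis F d :=
    h ⟨_, unitVec_zero_mem_timeAxis, rfl⟩
  set c := L (unitVec F 0) 0 with hc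
  have hL0 : L (unitVec F 0) = c • unitVec F 0 := mem_timeAxis_iff_eq.mp hLe0
  have hcne : c ≠ 0 := by
    intro h0
    have hz : L (unitVec F 0) = L 0 := by rw [hL0, h0, zero_smul, map_zero]
    have h1 : unitVec F 0 = (0 : Fin d → F) := L.injective hz
    have := congrFun h1 0
    simp [unitVec_apply] at this
  apply subset_antisymm h
  intro u hu
  refine ⟨(u 0 * c⁻¹) • unitVec F 0, ?_, ?_⟩
  · intro i hi; simp [unitVec_apply, hi]
  · rw [map_smul, hL0, smul_smul]
    have hval : u 0 * c⁻¹ * c = u 0 := by field_simp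
    rw [hval]
    exact (mem_timeAxis_iff_eq.mp hu).symm

lemma tfae_aux (B : (Fin d → F) → (Fin d → F) → F)
    (hsymm : ∀ u v, B u v = B v u)
    (hadd : ∀ u v w, B (u + v) w = B u w + B v w)
    (hsmul : ∀ (c : F) (u v : Fin d → F), B (c • u) v = c * B u v)
    (he0 : ∀ v, B v (unitVec F 0) = v 0)
    (hT : ∀ v, v ∈ timeAxis F d ↔ ∀ s, s 0 = 0 → B v s = 0)
    (L : (Fin d → F) ≃ₗ[F] (Fin d → F)) (a : F)
    (hsim : ∀ p q, sqDist B (L p) (L q) = a * sqDist B p q) :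
    List.TFAE [⇑L '' simul0 F d ⊆ simul0 F d,
               ⇑L '' simul0 F d = simul0 F d,
               ⇑L '' timeAxis F d ⊆ timeAxis F d,
               ⇑L '' timeAxis F d = timeAxis F d] := by
  have hsmul₂ : ∀ (c : F) (u v : Fin d → F), B u (c • v) = c * B u v := by
    intro c u v; rw [hsymm, hsmul, hsymm]
  have hQ1 : ∀ v, B (L v) (L v) = a * B v v := by
    intro v
    have := hsim v 0
    simpa [sqDist, map_zero, sub_zero] using this
  have expand : ∀ x y : Fin d → F,
      B (x + y) (x + y) = B x x + B x y + (B x y + B y y) := by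
    intro x y
    rw [hadd, hsymm x (x + y), hadd, hsymm y (x + y), hadd,
      hsymm x x, hsymm y x, hsymm y y]
  have hQ : ∀ u v, B (L u) (L v) = a * B u v := by
    intro u v
    have h1 := hQ1 (u + v)
    rw [map_add, expand, expand, hQ1 u, hQ1 v] at h1
    have key : (2 : F) * B (L u) (L v) = 2 * (a * B u v) := by linear_combination h1
    exact mul_left_cancel₀ two_ne_zero key
  have hBee : B (unitVec F 0) (unitVec F 0) = 1 := by
    rw [he0]; simp [unitVec_apply]
  have ha : a ≠ 0 := by
    intro h0
    have h1 := hQ (L.symm (unitVec F 0)) (L.symm (unitVec F 0))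
    rw [L.apply_symm_apply, hBee, h0, zero_mul] at h1
    exact one_ne_zero h1
  have hq_symm : ∀ u v, B (L.symm u) (L.symm v) = a⁻¹ * B u v := by
    intro u v
    have h1 := hQ (L.symm u) (L.symm v)
    rw [L.apply_symm_apply, L.apply_symm_apply] at h1
    rw [h1, inv_mul_cancel_left₀ ha]
  -- generic step: if M '' T = T and B(Mu,Mv) = b•B(u,v), then M '' S₀ ⊆ S₀
  have step41 : ∀ (M : (Fin d → F) ≃ₗ[F] (Fin d → F)) (b : F),
      (∀ u v, B (M u) (M v) = b * B u v) →
      ⇑M '' timeAxis F d = timeAxis F d →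
      ⇑M '' simul0 F d ⊆ simul0 F d := by
    intro M b hQM h4
    rintro _ ⟨s, hs, rfl⟩
    have hs0 : s 0 = 0 := hs
    obtain ⟨t, ht, hLt⟩ : unitVec F 0 ∈ ⇑M '' timeAxis F d := by
      rw [h4]; exact unitVec_zero_mem_timeAxis
    show (M s) 0 = 0
    rw [← he0 (M s), ← hLt, hQM]
    have hBst : B s t = 0 := by
      rw [mem_timeAxis_iff_eq.mp ht, hsmul₂, he0, hs0, mul_zero]
    rw [hBst, mul_zero]
  tfae_have 2 → 1 := fun h => h.subset
  tfae_have 1 → 4 := by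
    intro h1
    have hsub : ⇑L.symm '' timeAxis F d ⊆ timeAxis F d := by
      rintro _ ⟨u, hu, rfl⟩
      rw [hT]
      intro s hs
      have hLs : (L s) 0 = 0 := h1 ⟨s, hs, rfl⟩
      have hz : B u (L s) = 0 := (hT u).mp hu (L s) hLs
      have h2 := hQ (L.symm u) s
      rw [L.apply_symm_apply] at h2
      rw [h2] at hz
      exact (mul_eq_zero.mp hz).resolve_left ha
    have heq := image_timeAxis_eq L.symm hsub
    apply subset_antisymm
    · rintro _ ⟨t, ht, rfl⟩
      rw [← heq] at ht
      obtain ⟨w, hw, rfl⟩ := ht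
      rw [L.apply_symm_apply]; exact hw
    · intro u hu
      exact ⟨L.symm u, hsub ⟨u, hu, rfl⟩, L.apply_symm_apply u⟩
  tfae_have 4 → 3 := fun h => h.subset
  tfae_have 3 → 4 := image_timeAxis_eq L
  tfae_have 4 → 2 := by
    intro h4
    apply subset_antisymm (step41 L a hQ h4)
    have h4s : ⇑L.symm '' timeAxis F d = timeAxis F d := by
      apply subset_antisymm
      · rintro _ ⟨t, ht, rfl⟩
        rw [← h4] at ht
        obtain ⟨w, hw, rfl⟩ := ht
        rw [L.symm_apply_apply]; exact hw
      · intro u hu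
        refine ⟨L u, ?_, L.symm_apply_apply u⟩
        rw [← h4]; exact ⟨u, hu, rfl⟩
    have hstep := step41 L.symm a⁻¹ hq_symm h4s
    intro s hs
    exact ⟨L.symm s, hstep ⟨s, hs, rfl⟩, L.apply_symm_apply s⟩
  tfae_finish

lemma euclProd_symm (u v : Fin d → F) : euclProd u v = euclProd v u := by
  simp [euclProd, mul_comm]

lemma euclProd_add (u v w : Fin d → F) :
    euclProd (u + v) w = euclProd u w + euclProd v w := by
  simp [euclProd, add_mul, Finset.sum_add_distrib]

lemma euclProd_smul (c : F) (u v : Fin d → F) :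
    euclProd (c • u) v = c * euclProd u v := by
  simp [euclProd, Finset.mul_sum, mul_assoc]

lemma euclProd_unitVec (v : Fin d → F) (i : Fin d) :
    euclProd v (unitVec F i) = v i := by
  simp [euclProd, unitVec_apply, mul_ite]

lemma euclProd_timeAxis (v : Fin d → F) :
    v ∈ timeAxis F d ↔ ∀ s, s 0 = 0 → euclProd v s = 0 := by
  constructor
  · intro hv s hs
    apply Finset.sum_eq_zero
    intro i _
    by_cases hi : i = 0
    · subst hi; rw [hs, mul_zero]
    · rw [hv i hi, zero_mul]
  · intro h i hi
    have h1 := h (unitVec F i) (by simp [unitVec_apply, Ne.symm hi])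
    rwa [euclProd_unitVec] at h1

lemma minkProd_symm (u v : Fin d → F) : minkProd u v = minkProd v u := by
  simp [minkProd, mul_comm]

lemma minkProd_add (u v w : Fin d → F) :
    minkProd (u + v) w = minkProd u w + minkProd v w := by
  simp only [minkProd, Pi.add_apply, add_mul, Finset.sum_add_distrib]
  ring

lemma minkProd_smul (c : F) (u v : Fin d → F) :
    minkProd (c • u) v = c * minkProd u v := by
  simp only [minkProd, Pi.smul_apply, smul_eq_mul, mul_assoc, ← Finset.mul_sum]
  ring

lemma minkProd_unitVec_zero (v : Fin d → F) :
    minkProd v (unitVec F 0) = v 0 := by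
  have hz : ∑ j ∈ Finset.univ.erase (0 : Fin d), v j * unitVec F 0 j = 0 :=
    Finset.sum_eq_zero fun j hj => by
      simp [unitVec_apply, Finset.ne_of_mem_erase hj]
  simp [minkProd, hz, unitVec_apply]

lemma minkProd_unitVec_ne (v : Fin d → F) {i : Fin d} (hi : i ≠ 0) :
    minkProd v (unitVec F i) = -(v i) := by
  have h0 : unitVec F i 0 = (0 : F) := by simp [unitVec_apply, Ne.symm hi]
  have hsum : ∑ j ∈ Finset.univ.erase (0 : Fin d), v j * unitVec F i j = v i := by
    simp [unitVec_apply, mul_ite, Finset.sum_ite_eq', hi]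
  rw [minkProd, h0, mul_zero, hsum, zero_sub]

lemma minkProd_timeAxis (v : Fin d → F) :
    v ∈ timeAxis F d ↔ ∀ s, s 0 = 0 → minkProd v s = 0 := by
  constructor
  · intro hv s hs
    have hz : ∑ i ∈ Finset.univ.erase (0 : Fin d), v i * s i = 0 :=
      Finset.sum_eq_zero fun i hiu => by
        rw [hv i (Finset.ne_of_mem_erase hiu), zero_mul]
    rw [minkProd, hs, mul_zero, hz, sub_zero]
  · intro h i hi
    have h1 := h (unitVec F i) (by simp [unitVec_apply, Ne.symm hi])
    rw [minkProd_unitVec_ne v hi] at h1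
    exact neg_eq_zero.mp h1

end Auxiliary

/-- for a linear bijection that is a Euclidean or Poincaré
similarity, preserving `S₀` and preserving `T` are all equivalent. -/
theorem preserve_simul0_iff_preserve_timeAxis [NeZero d] (hd : 2 ≤ d)
    (L : (Fin d → F) ≃ₗ[F] (Fin d → F))
    (hL : EuclSim (⇑L) ∨ PoiSim (⇑L)) :
    List.TFAE [⇑L '' simul0 F d ⊆ simul0 F d,
               ⇑L '' simul0 F d = simul0 F d,
               ⇑L '' timeAxis F d ⊆ timeAxis F d,
               ⇑L '' timeAxis F d = timeAxis F d] := by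
  rcases hL with ⟨_, a, hsim⟩ | ⟨_, a, hsim⟩
  · exact tfae_aux euclProd euclProd_symm euclProd_add euclProd_smul
      (fun v => euclProd_unitVec v 0) euclProd_timeAxis L a hsim
  · exact tfae_aux minkProd minkProd_symm minkProd_add minkProd_smul
      minkProd_unitVec_zero minkProd_timeAxis L a hsim

end Spacetimes
end

section
/- A Euclidean similarity respects the binary relation S if and only if it respects the binary relation Rest. Hence the set of Euclidean similarities respecting S equals the set of Euclidean similarities respecting Rest, i.e., equals the set of trivial Euclidean similarities. -/
namespace Spacetimes

open Finset

variable {F : Type*} [Field F] [LinearOrder F] [IsStrictOrderedRing F] {d : ℕ}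

lemma euclProd_single_right (v : Fin d → F) (i : Fin d) :
    euclProd v (Pi.single i 1) = v i := by
  unfold euclProd
  rw [Finset.sum_eq_single i]
  · simp
  · intro j _ hj; rw [Pi.single_eq_of_ne hj, mul_zero]
  · simp

lemma euclProd_add_add (v w : Fin d → F) :
    euclProd (v + w) (v + w) = euclProd v v + 2 * euclProd v w + euclProd w w := by
  unfold euclProd
  simp only [Pi.add_apply, add_mul, mul_add, Finset.sum_add_distrib]
  rw [show (∑ i, w i * v i) = ∑ i, v i * w i from
    Finset.sum_congr rfl fun i _ => mul_comm _ _]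
  ring

lemma euclProd_self_eq_zero {v : Fin d → F} (h : euclProd v v = 0) : v = 0 := by
  funext i
  have h2 := (Finset.sum_eq_zero_iff_of_nonneg
    (fun j _ => mul_self_nonneg (v j))).mp h i (Finset.mem_univ i)
  exact mul_self_eq_zero.mp h2

lemma rest_iff_orth [NeZero d] (u : Fin d → F) :
    (∀ i, i ≠ 0 → u i = 0) ↔ ∀ w : Fin d → F, w 0 = 0 → euclProd u w = 0 := by
  constructor
  · intro h w hw
    apply Finset.sum_eq_zero
    intro i _
    by_cases hi : i = 0
    · subst hi; rw [hw, mul_zero]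
    · rw [h i hi, zero_mul]
  · intro h i hi
    have h0 : (Pi.single i (1 : F) : Fin d → F) 0 = 0 := by rw [Pi.single_eq_of_ne (Ne.symm hi)]
    have := h _ h0
    rwa [euclProd_single_right] at this

lemma sim_iff_orth [NeZero d] (u : Fin d → F) :
    u 0 = 0 ↔ ∀ w : Fin d → F, (∀ i, i ≠ 0 → w i = 0) → euclProd u w = 0 := by
  constructor
  · intro h w hw
    apply Finset.sum_eq_zero
    intro i _
    by_cases hi : i = 0
    · subst hi; rw [h, zero_mul]
    · rw [hw i hi, mul_zero]
  · intro h
    have hw : ∀ i, i ≠ (0 : Fin d) → (Pi.single (0 : Fin d) (1 : F) : Fin d → F) i = 0 :=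
      fun i hi => by rw [Pi.single_eq_of_ne hi]
    have := h _ hw
    rwa [euclProd_single_right] at this

/-- a Euclidean similarity respects `S` iff it respects `Rest`;
hence the Euclidean similarities respecting `S` are exactly the trivial
Euclidean similarities. -/
theorem euclSim_respects_S_iff_respects_Rest [NeZero d] (hd : 2 ≤ d) :
    (∀ A : (Fin d → F) → (Fin d → F), EuclSim A →
      (Respects2 A SimRel ↔ Respects2 A RestRel)) ∧
    {A : (Fin d → F) → (Fin d → F) | EuclSim A ∧ Respects2 A SimRel}
      = {A | TrivEuclSim A} := by
  have main : ∀ A : (Fin d → F) → (Fin d → F), EuclSim A →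
      (Respects2 A SimRel ↔ Respects2 A RestRel) := by
    intro A hA
    obtain ⟨⟨L, t, hL⟩, a, ha⟩ := hA
    have hQ : ∀ v : Fin d → F, euclProd (L v) (L v) = a * euclProd v v := by
      intro v
      have h := ha v 0
      have h1 : A v - A 0 = L v := by rw [hL, hL]; simp
      rw [sqDist, sqDist, h1, sub_zero] at h
      exact h
    have hB : ∀ v w : Fin d → F, euclProd (L v) (L w) = a * euclProd v w := by
      intro v w
      have h := hQ (v + w)
      rw [map_add, euclProd_add_add, euclProd_add_add] at h
      linear_combination (h - hQ v - hQ w) / 2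
    have ha0 : a ≠ 0 := by
      intro h0
      have hz : euclProd (L (Pi.single (0 : Fin d) (1 : F)))
          (L (Pi.single (0 : Fin d) (1 : F))) = 0 := by rw [hQ, h0, zero_mul]
      have hz2 := euclProd_self_eq_zero hz
      have hz3 : (Pi.single (0 : Fin d) (1 : F)) = (0 : Fin d → F) := by
        apply L.injective; rw [hz2, map_zero]
      have := congrFun hz3 0
      simp at this
    have key : ∀ p q : Fin d → F, A p 0 = A q 0 ↔ (L (p - q)) 0 = 0 := by
      intro p q
      rw [hL, hL, map_sub]
      simp [sub_eq_zero]
    have key0 : ∀ p q : Fin d → F, p 0 = q 0 ↔ (p - q) 0 = 0 := by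
      intro p q; simp [sub_eq_zero]
    have keyR : ∀ p q : Fin d → F,
        RestRel (A p) (A q) ↔ ∀ i, i ≠ 0 → (L (p - q)) i = 0 := by
      intro p q
      unfold RestRel
      rw [hL, hL, map_sub]
      refine forall_congr' fun i => imp_congr_right fun _ => ?_
      simp [sub_eq_zero]
    have keyR0 : ∀ p q : Fin d → F,
        RestRel p q ↔ ∀ i, i ≠ 0 → (p - q) i = 0 := by
      intro p q
      unfold RestRel
      refine forall_congr' fun i => imp_congr_right fun _ => ?_
      simp [sub_eq_zero]
    have simChar : Respects2 A SimRel ↔ (∀ v : Fin d → F, v 0 = 0 ↔ (L v) 0 = 0) := by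
      constructor
      · intro h v
        have h2 := h v 0
        unfold SimRel at h2
        rw [key v 0] at h2
        simpa using h2
      · intro h p q
        unfold SimRel
        rw [key p q, key0 p q]
        exact h (p - q)
    have restChar : Respects2 A RestRel ↔
        (∀ v : Fin d → F, (∀ i, i ≠ 0 → v i = 0) ↔ (∀ i, i ≠ 0 → (L v) i = 0)) := by
      constructor
      · intro h v
        have h2 := h v 0
        rw [keyR v 0, keyR0 v 0] at h2
        simpa using h2
      · intro h p q
        rw [keyR p q, keyR0 p q]
        exact h (p - q)
    rw [simChar, restChar]
    constructor
    · intro hP v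
      constructor
      · intro hv
        rw [rest_iff_orth]
        intro w hw
        obtain ⟨u, rfl⟩ := L.surjective w
        have hu : u 0 = 0 := (hP u).mpr hw
        rw [hB, (rest_iff_orth v).mp hv u hu, mul_zero]
      · intro hv
        rw [rest_iff_orth]
        intro w hw
        have h1 : euclProd (L v) (L w) = 0 :=
          (rest_iff_orth (L v)).mp hv (L w) ((hP w).mp hw)
        rw [hB] at h1
        exact (mul_eq_zero.mp h1).resolve_left ha0
    · intro hR v
      constructor
      · intro hv
        rw [sim_iff_orth]
        intro w hw
        obtain ⟨u, rfl⟩ := L.surjective w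
        have hu := (hR u).mpr hw
        rw [hB, (sim_iff_orth v).mp hv u hu, mul_zero]
      · intro hv
        rw [sim_iff_orth]
        intro w hw
        have h1 : euclProd (L v) (L w) = 0 :=
          (sim_iff_orth (L v)).mp hv (L w) ((hR w).mp hw)
        rw [hB] at h1
        exact (mul_eq_zero.mp h1).resolve_left ha0
  refine ⟨main, ?_⟩
  ext A
  simp only [Set.mem_setOf_eq, TrivEuclSim]
  constructor
  · rintro ⟨hE, hS⟩; exact ⟨hE, (main A hE).mp hS⟩
  · rintro ⟨hE, hR⟩; exact ⟨hE, (main A hE).mpr hR⟩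

end Spacetimes
end

section
/- For a Poincaré similarity A, the following are equivalent: A respects the binary relation S; A respects the binary relation Rest; A is a trivial Euclidean similarity. In particular, the Poincaré similarities respecting Rest are exactly the trivial Euclidean similarities. -/
namespace Spacetimes

open Finset

variable {F : Type*} [Field F] [LinearOrder F] [IsStrictOrderedRing F] {d : ℕ}

section Aux

variable [NeZero d]

lemma euclProd_eq (v w : Fin d → F) :
    euclProd v w = v 0 * w 0 + ∑ i ∈ Finset.univ.erase (0 : Fin d), v i * w i :=
  (Finset.add_sum_erase _ _ (Finset.mem_univ 0)).symm

lemma eucl_add_mink (v w : Fin d → F) :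
    euclProd v w + minkProd v w = 2 * (v 0 * w 0) := by
  rw [euclProd_eq]; unfold minkProd; ring

lemma mink_timeAxis (v w : Fin d → F) (hw : ∀ i, i ≠ 0 → w i = 0) :
    minkProd v w = v 0 * w 0 := by
  unfold minkProd
  rw [Finset.sum_eq_zero, sub_zero]
  intro i hi
  rw [hw i (Finset.ne_of_mem_erase hi), mul_zero]

lemma eucl_timeAxis (v w : Fin d → F) (hw : ∀ i, i ≠ 0 → w i = 0) :
    euclProd v w = v 0 * w 0 := by
  have h := eucl_add_mink v w
  rw [mink_timeAxis v w hw] at h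
  linarith

lemma mink_comm (v w : Fin d → F) : minkProd v w = minkProd w v := by
  unfold minkProd
  rw [mul_comm]
  congr 1
  exact Finset.sum_congr rfl fun i _ => mul_comm _ _

lemma mink_single_ne (x : Fin d → F) {i : Fin d} (hi : i ≠ 0) :
    minkProd x (Pi.single i (1 : F)) = -x i := by
  unfold minkProd
  rw [Pi.single_eq_of_ne (Ne.symm hi), mul_zero, zero_sub, neg_inj]
  rw [Finset.sum_eq_single i]
  · rw [Pi.single_eq_same, mul_one]
  · intro j _ hji
    rw [Pi.single_eq_of_ne hji, mul_zero]
  · intro h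
    exact absurd (Finset.mem_erase.mpr ⟨hi, Finset.mem_univ i⟩) h

lemma eucl_expand (p q : Fin d → F) :
    euclProd (p + q) (p + q) = euclProd p p + 2 * euclProd p q + euclProd q q := by
  unfold euclProd
  simp only [Pi.add_apply]
  rw [Finset.mul_sum, ← Finset.sum_add_distrib, ← Finset.sum_add_distrib]
  exact Finset.sum_congr rfl fun i _ => by ring

lemma mink_expand (p q : Fin d → F) :
    minkProd (p + q) (p + q) = minkProd p p + 2 * minkProd p q + minkProd q q := by
  have h := eucl_expand p q
  have h1 := eucl_add_mink (p + q) (p + q)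
  have h2 := eucl_add_mink p p
  have h3 := eucl_add_mink p q
  have h4 := eucl_add_mink q q
  simp only [Pi.add_apply] at h1
  linear_combination -h + h1 - h2 - 2 * h3 - h4

lemma mink_bilin {L : (Fin d → F) ≃ₗ[F] (Fin d → F)} {a : F}
    (h : ∀ v, minkProd (L v) (L v) = a * minkProd v v) (v w : Fin d → F) :
    minkProd (L v) (L w) = a * minkProd v w := by
  have h1 := h (v + w)
  rw [map_add, mink_expand, mink_expand] at h1
  linear_combination h1 / 2 - h v / 2 - h w / 2

lemma eucl_bilin {L : (Fin d → F) ≃ₗ[F] (Fin d → F)} {a : F}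
    (h : ∀ v, euclProd (L v) (L v) = a * euclProd v v) (v w : Fin d → F) :
    euclProd (L v) (L w) = a * euclProd v w := by
  have h1 := h (v + w)
  rw [map_add, eucl_expand, eucl_expand] at h1
  linear_combination h1 / 2 - h v / 2 - h w / 2

lemma unitVec0_spatial (i : Fin d) (hi : i ≠ 0) : unitVec F (0 : Fin d) i = 0 :=
  Pi.single_eq_of_ne hi 1

lemma unitVec0_zero : unitVec F (0 : Fin d) 0 = 1 := Pi.single_eq_same 0 1

lemma key_of_rest {L : (Fin d → F) ≃ₗ[F] (Fin d → F)} {a : F}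
    {P : (Fin d → F) → (Fin d → F) → F}
    (hb : ∀ v w, P (L v) (L w) = a * P v w)
    (hPt : ∀ v w : Fin d → F, (∀ i, i ≠ 0 → w i = 0) → P v w = v 0 * w 0)
    (hR : ∀ i, i ≠ (0 : Fin d) → L (unitVec F (0 : Fin d)) i = 0) :
    a ≠ 0 ∧ ∀ v : Fin d → F,
      L v 0 * L v 0 = a * (v 0 * v 0) ∧ (v 0 = 0 ↔ L v 0 = 0) := by
  have he0 : ∀ i, i ≠ (0 : Fin d) → unitVec F (0 : Fin d) i = 0 := unitVec0_spatial
  have hc : L (unitVec F (0 : Fin d)) 0 ≠ 0 := by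
    intro h0
    have hz : L (unitVec F (0 : Fin d)) = L 0 := by
      rw [map_zero]
      funext i
      by_cases hi : i = (0 : Fin d)
      · rw [hi]; exact h0
      · exact hR i hi
    have h1 := congrFun (L.injective hz) 0
    rw [unitVec, Pi.single_eq_same] at h1
    exact one_ne_zero h1
  have key : ∀ v : Fin d → F, L v 0 * L (unitVec F (0 : Fin d)) 0 = a * v 0 := by
    intro v
    have h1 := hb v (unitVec F 0)
    rw [hPt (L v) _ hR, hPt v _ he0, unitVec0_zero, mul_one] at h1
    exact h1
  have hca : L (unitVec F (0 : Fin d)) 0 * L (unitVec F (0 : Fin d)) 0 = a := by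
    have h1 := key (unitVec F 0)
    rw [unitVec0_zero, mul_one] at h1
    exact h1
  have ha : a ≠ 0 := hca ▸ mul_ne_zero hc hc
  refine ⟨ha, fun v => ?_⟩
  have hsq : L v 0 * L v 0 = a * (v 0 * v 0) := by
    have h1 : (L v 0 * L (unitVec F (0 : Fin d)) 0) * (L v 0 * L (unitVec F (0 : Fin d)) 0)
        = (a * v 0) * (a * v 0) := by rw [key v]
    apply mul_left_cancel₀ ha
    linear_combination h1 - (L v 0 * L v 0) * hca
  refine ⟨hsq, ?_, ?_⟩
  · intro h0
    have h1 := key v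
    rw [h0, mul_zero] at h1
    exact (mul_eq_zero.mp h1).resolve_right hc
  · intro h0
    have h1 := key v
    rw [h0, zero_mul] at h1
    exact (mul_eq_zero.mp h1.symm).resolve_left ha

lemma rest_iff_of_simul {L : (Fin d → F) ≃ₗ[F] (Fin d → F)} {a : F}
    (hb : ∀ v w, minkProd (L v) (L w) = a * minkProd v w) (ha : a ≠ 0)
    (hS : ∀ v : Fin d → F, v 0 = 0 ↔ L v 0 = 0) (v : Fin d → F) :
    (∀ i, i ≠ 0 → v i = 0) ↔ (∀ i, i ≠ 0 → L v i = 0) := by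
  constructor
  · intro hv i hi
    have hLu : L (L.symm (Pi.single i (1 : F))) = Pi.single i 1 := L.apply_symm_apply _
    have hu0 : (L.symm (Pi.single i (1 : F))) 0 = 0 := by
      apply (hS _).mpr
      rw [hLu]
      exact Pi.single_eq_of_ne (Ne.symm hi) 1
    have h1 := hb v (L.symm (Pi.single i (1 : F)))
    rw [hLu, mink_single_ne _ hi] at h1
    have h2 : minkProd v (L.symm (Pi.single i (1 : F))) = 0 := by
      rw [mink_comm, mink_timeAxis _ _ hv, hu0, zero_mul]
    rw [h2, mul_zero] at h1
    exact neg_eq_zero.mp h1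
  · intro hv i hi
    have h0 : (Pi.single i (1 : F) : Fin d → F) 0 = 0 := by
      rw [Pi.single_eq_of_ne (Ne.symm hi)]
    have hL0 : L (Pi.single i (1 : F)) 0 = 0 := (hS _).mp h0
    have h1 := hb v (Pi.single i 1)
    rw [mink_single_ne _ hi] at h1
    have h2 : minkProd (L v) (L (Pi.single i (1 : F))) = 0 := by
      rw [mink_comm, mink_timeAxis _ _ hv, hL0, zero_mul]
    rw [h2] at h1
    have h3 := (mul_eq_zero.mp h1.symm).resolve_left ha
    exact neg_eq_zero.mp h3

lemma quad_of_sqdist {A : (Fin d → F) → (Fin d → F)}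
    {L : (Fin d → F) ≃ₗ[F] (Fin d → F)} {t : Fin d → F}
    (hA : ∀ p, A p = L p + t)
    {B : (Fin d → F) → (Fin d → F) → F} {a : F}
    (h : ∀ p q, sqDist B (A p) (A q) = a * sqDist B p q) :
    ∀ v, B (L v) (L v) = a * B v v := by
  intro v
  have h1 := h v 0
  have h2 : A v - A 0 = L v := by rw [hA v, hA 0, map_zero]; abel
  unfold sqDist at h1
  rw [h2, sub_zero] at h1
  exact h1

lemma sqdist_of_quad {A : (Fin d → F) → (Fin d → F)}
    {L : (Fin d → F) ≃ₗ[F] (Fin d → F)} {t : Fin d → F}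
    (hA : ∀ p, A p = L p + t)
    {B : (Fin d → F) → (Fin d → F) → F} {a : F}
    (h : ∀ v, B (L v) (L v) = a * B v v) :
    ∀ p q, sqDist B (A p) (A q) = a * sqDist B p q := by
  intro p q
  have h2 : A p - A q = L (p - q) := by rw [hA p, hA q, map_sub]; abel
  unfold sqDist
  rw [h2]
  exact h (p - q)

lemma respects_simul_iff {A : (Fin d → F) → (Fin d → F)}
    {L : (Fin d → F) ≃ₗ[F] (Fin d → F)} {t : Fin d → F}
    (hA : ∀ p, A p = L p + t) :
    Respects2 A SimRel ↔ ∀ v : Fin d → F, (v 0 = 0 ↔ L v 0 = 0) := by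
  have hsub : ∀ p q : Fin d → F, (SimRel (A p) (A q) ↔ L (p - q) 0 = 0) := by
    intro p q
    unfold SimRel
    rw [hA p, hA q, map_sub]
    simp only [Pi.add_apply, Pi.sub_apply]
    constructor
    · intro h; linarith
    · intro h; linarith
  constructor
  · intro h v
    have h1 := h v 0
    rw [hsub] at h1
    simp only [SimRel, Pi.zero_apply, sub_zero] at h1
    exact h1
  · intro h p q
    rw [hsub]
    have h1 := h (p - q)
    rw [Pi.sub_apply, sub_eq_zero] at h1
    exact h1

lemma respects_rest_iff {A : (Fin d → F) → (Fin d → F)}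
    {L : (Fin d → F) ≃ₗ[F] (Fin d → F)} {t : Fin d → F}
    (hA : ∀ p, A p = L p + t) :
    Respects2 A RestRel ↔
      ∀ v : Fin d → F, ((∀ i, i ≠ 0 → v i = 0) ↔ (∀ i, i ≠ 0 → L v i = 0)) := by
  have hsub : ∀ p q : Fin d → F,
      (RestRel (A p) (A q) ↔ ∀ i, i ≠ 0 → L (p - q) i = 0) := by
    intro p q
    constructor
    · intro hpq i hi
      have h1 := hpq i hi
      rw [hA p, hA q] at h1
      simp only [Pi.add_apply] at h1
      rw [map_sub]
      simp only [Pi.sub_apply]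
      linarith
    · intro hpq i hi
      have h1 := hpq i hi
      rw [map_sub] at h1
      simp only [Pi.sub_apply, sub_eq_zero] at h1
      rw [hA p, hA q]
      simp only [Pi.add_apply, h1]
  constructor
  · intro h v
    have h1 := h v 0
    rw [hsub] at h1
    simp only [RestRel, Pi.zero_apply, sub_zero] at h1
    exact h1
  · intro h p q
    rw [hsub]
    constructor
    · intro hpq i hi
      refine (h (p - q)).mp (fun j hj => ?_) i hi
      rw [Pi.sub_apply, sub_eq_zero]
      exact hpq j hj
    · intro hL i hi
      have h1 := (h (p - q)).mpr hL i hi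
      rw [Pi.sub_apply, sub_eq_zero] at h1
      exact h1

end Aux

/-- for a Poincaré similarity, respecting `S`, respecting `Rest`
and being a trivial Euclidean similarity are equivalent; in particular the
Poincaré similarities respecting `Rest` are exactly the trivial Euclidean
similarities. -/
theorem poiSim_respects_iff_trivEuclSim [NeZero d] (hd : 2 ≤ d) :
    (∀ A : (Fin d → F) → (Fin d → F), PoiSim A →
      ((Respects2 A SimRel ↔ Respects2 A RestRel) ∧
       (Respects2 A RestRel ↔ TrivEuclSim A))) ∧
    {A : (Fin d → F) → (Fin d → F) | PoiSim A ∧ Respects2 A RestRel}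
      = {A | TrivEuclSim A} := by
  have main : ∀ A : (Fin d → F) → (Fin d → F), PoiSim A →
      ((Respects2 A SimRel ↔ Respects2 A RestRel) ∧
       (Respects2 A RestRel ↔ TrivEuclSim A)) := by
    intro A hP
    obtain ⟨⟨L, t, hAf⟩, a, hsc⟩ := hP
    have hq : ∀ v, minkProd (L v) (L v) = a * minkProd v v := quad_of_sqdist hAf hsc
    have hb : ∀ v w, minkProd (L v) (L w) = a * minkProd v w := mink_bilin hq
    have ha : a ≠ 0 := by
      intro h0
      have h1 := hq (L.symm (unitVec F 0))
      rw [L.apply_symm_apply, h0, zero_mul,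
        mink_timeAxis _ _ unitVec0_spatial, unitVec0_zero, one_mul] at h1
      exact one_ne_zero h1
    rw [respects_simul_iff hAf, respects_rest_iff hAf]
    constructor
    · constructor
      · intro hS v
        exact rest_iff_of_simul hb ha hS v
      · intro hR v
        have hLe0 : ∀ i, i ≠ (0 : Fin d) → L (unitVec F (0 : Fin d)) i = 0 :=
          (hR (unitVec F 0)).mp unitVec0_spatial
        exact ((key_of_rest hb mink_timeAxis hLe0).2 v).2
    · constructor
      · intro hR
        have hLe0 : ∀ i, i ≠ (0 : Fin d) → L (unitVec F (0 : Fin d)) i = 0 :=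
          (hR (unitVec F 0)).mp unitVec0_spatial
        obtain ⟨ha', hkey⟩ := key_of_rest hb mink_timeAxis hLe0
        refine ⟨⟨⟨L, t, hAf⟩, a, sqdist_of_quad hAf ?_⟩, (respects_rest_iff hAf).mpr hR⟩
        intro v
        have e1 := eucl_add_mink (L v) (L v)
        have e2 := eucl_add_mink v v
        linear_combination e1 - a * e2 - hq v + 2 * (hkey v).1
      · intro hT
        exact (respects_rest_iff hAf).mp hT.2
  refine ⟨main, ?_⟩
  ext A
  simp only [Set.mem_setOf_eq]
  constructor
  · rintro ⟨hP, hR⟩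
    exact (main A hP).2.mp hR
  · intro hT
    refine ⟨?_, hT.2⟩
    obtain ⟨⟨⟨L, t, hAf⟩, a, hsc⟩, hR⟩ := hT
    have hq : ∀ v, euclProd (L v) (L v) = a * euclProd v v := quad_of_sqdist hAf hsc
    have hb : ∀ v w, euclProd (L v) (L w) = a * euclProd v w := eucl_bilin hq
    have hRv := (respects_rest_iff hAf).mp hR
    have hLe0 : ∀ i, i ≠ (0 : Fin d) → L (unitVec F (0 : Fin d)) i = 0 :=
      (hRv (unitVec F 0)).mp unitVec0_spatial
    obtain ⟨ha, hkey⟩ := key_of_rest hb eucl_timeAxis hLe0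
    refine ⟨⟨L, t, hAf⟩, a, sqdist_of_quad hAf ?_⟩
    intro v
    have e1 := eucl_add_mink (L v) (L v)
    have e2 := eucl_add_mink v v
    linear_combination e1 - a * e2 - hq v + 2 * (hkey v).1

end Spacetimes
end

section
/- If d > 2, then a map A : F^d → F^d is both a Euclidean similarity and a Poincaré similarity if and only if A is a trivial Euclidean similarity. -/
namespace Spacetimes

open Finset

variable {F : Type*} [Field F] [LinearOrder F] [IsStrictOrderedRing F] {d : ℕ}

lemma euclProd_add_self (u v : Fin d → F) :
    euclProd (u+v) (u+v) = euclProd u u + 2*euclProd u v + euclProd v v := by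
  simp [euclProd, add_mul, mul_add, Finset.sum_add_distrib, mul_comm]
  ring

lemma euclProd_nonneg (p : Fin d → F) : 0 ≤ euclProd p p :=
  Finset.sum_nonneg fun i _ => mul_self_nonneg _

lemma minkProd_self [NeZero d] (p : Fin d → F) :
    minkProd p p = 2 * (p 0 * p 0) - euclProd p p := by
  rw [minkProd, euclProd, ← Finset.add_sum_erase _ _ (Finset.mem_univ (0 : Fin d))]
  ring

lemma euclProd_single_left (i : Fin d) (v : Fin d → F) :
    euclProd (Pi.single i (1:F)) v = v i := by
  simp [euclProd, Pi.single_apply, ite_mul]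

lemma euclProd_single_single (i j : Fin d) :
    euclProd (Pi.single i (1:F)) (Pi.single j 1) = if i = j then 1 else 0 := by
  rw [euclProd_single_left, Pi.single_apply]

lemma spatial_zero_iff [NeZero d] (v : Fin d → F) :
    (∀ i, i ≠ 0 → v i = 0) ↔ euclProd v v - v 0 * v 0 = 0 := by
  have hsum : euclProd v v - v 0 * v 0 = ∑ i ∈ Finset.univ.erase (0:Fin d), v i * v i := by
    rw [euclProd, ← Finset.add_sum_erase _ _ (Finset.mem_univ (0:Fin d))]; ring
  rw [hsum]
  constructor
  · intro h
    exact Finset.sum_eq_zero fun i hi => by rw [h i (Finset.ne_of_mem_erase hi)]; ring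
  · intro h i hi
    have := (Finset.sum_eq_zero_iff_of_nonneg (fun i _ => mul_self_nonneg (v i))).mp h i
      (Finset.mem_erase.mpr ⟨hi, Finset.mem_univ i⟩)
    exact mul_self_eq_zero.mp this

lemma affine_reduce {A : (Fin d → F) → (Fin d → F)} {L : (Fin d → F) ≃ₗ[F] (Fin d → F)}
    {t : Fin d → F} (hA : ∀ p, A p = L p + t) (p q : Fin d → F) :
    A p - A q = L (p - q) := by
  rw [hA, hA, map_sub]; ring

lemma sim_reduce {A : (Fin d → F) → (Fin d → F)} {L : (Fin d → F) ≃ₗ[F] (Fin d → F)}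
    {t : Fin d → F} {B : (Fin d → F) → (Fin d → F) → F} {a : F}
    (hA : ∀ p, A p = L p + t)
    (h : ∀ p q : Fin d → F, sqDist B (A p) (A q) = a * sqDist B p q)
    (v : Fin d → F) : B (L v) (L v) = a * B v v := by
  have := h v 0
  rw [sqDist, sqDist, affine_reduce hA, sub_zero] at this
  exact this

set_option maxHeartbeats 1000000 in
/-- if `d > 2`, then the maps that are both Euclidean and
Poincaré similarities are exactly the trivial Euclidean similarities. -/
theorem euclSim_and_poiSim_iff_trivEuclSim [NeZero d] (hd : 2 < d)
    (A : (Fin d → F) → (Fin d → F)) :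
    (EuclSim A ∧ PoiSim A) ↔ TrivEuclSim A := by
  constructor
  · rintro ⟨⟨⟨L, t, hA⟩, a, ha⟩, ⟨_, b, hb⟩⟩
    refine ⟨⟨⟨L, t, hA⟩, a, ha⟩, ?_⟩
    have hE : ∀ v, euclProd (L v) (L v) = a * euclProd v v := sim_reduce hA ha
    have hM : ∀ v, minkProd (L v) (L v) = b * minkProd v v := sim_reduce hA hb
    set i1 : Fin d := ⟨1, by omega⟩ with hi1def
    set i2 : Fin d := ⟨2, by omega⟩ with hi2def
    have h0v : (0 : Fin d).val = 0 := Fin.val_zero d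
    have hi1 : i1 ≠ 0 := by simp [hi1def, Fin.ext_iff, h0v]
    have hi2 : i2 ≠ 0 := by simp [hi2def, Fin.ext_iff, h0v]
    have hi12 : i1 ≠ i2 := by simp [hi1def, hi2def, Fin.ext_iff]
    set e1 : Fin d → F := Pi.single i1 1 with he1
    set e2 : Fin d → F := Pi.single i2 1 with he2
    have hE1 : euclProd e1 e1 = 1 := by
      simpa using euclProd_single_single i1 i1
    have hE2 : euclProd e2 e2 = 1 := by
      simpa using euclProd_single_single i2 i2
    have hE12 : euclProd e1 e2 = 0 := by
      simpa [hi12] using euclProd_single_single i1 i2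
    have he10 : e1 0 = 0 := Pi.single_eq_of_ne (Ne.symm hi1) 1
    have he20 : e2 0 = 0 := Pi.single_eq_of_ne (Ne.symm hi2) 1
    -- squared time components
    set x : F := L e1 0 with hx
    set y : F := L e2 0 with hy
    have h1 : 2 * (x * x) = a - b := by
      have hm := minkProd_self (L e1)
      have hm2 := minkProd_self e1
      rw [hM e1, hE e1] at hm
      rw [he10, hE1] at hm2
      rw [hm2, hE1] at hm
      linarith [hm]
    have h2 : 2 * (y * y) = a - b := by
      have hm := minkProd_self (L e2)
      have hm2 := minkProd_self e2
      rw [hM e2, hE e2] at hm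
      rw [he20, hE2] at hm2
      rw [hm2, hE2] at hm
      linarith [hm]
    have h3 : 2 * ((x + y) * (x + y)) = 2 * (a - b) := by
      have hm := minkProd_self (L (e1 + e2))
      have hm2 := minkProd_self (e1 + e2)
      have hEsum : euclProd (e1 + e2) (e1 + e2) = 2 := by
        rw [euclProd_add_self, hE1, hE2, hE12]; ring
      have h0sum : (e1 + e2) 0 = 0 := by simp [he10, he20]
      rw [hM (e1+e2), hE (e1+e2)] at hm
      rw [h0sum, hEsum] at hm2
      rw [hm2, hEsum, map_add] at hm
      have hL0 : (L e1 + L e2) 0 = x + y := rfl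
      rw [hL0] at hm
      linarith [hm]
    have hxy : x * y = 0 := by linear_combination (h3 - h1 - h2) / 4
    have h4 : 2 * (x * x) * (2 * (y * y)) = (a - b) * (a - b) := by rw [h1, h2]
    have habs : (a - b) * (a - b) = 0 := by
      linear_combination 4 * (x * y) * hxy - h4
    have hab : a = b := by
      have := mul_self_eq_zero.mp habs; linarith
    -- a ≠ 0
    have ha0 : a ≠ 0 := by
      intro h
      have := hE (L.symm e1)
      rw [LinearEquiv.apply_symm_apply, hE1, h, zero_mul] at this
      exact one_ne_zero this
    -- spatial squared norm scales by a
    have hSc : ∀ v : Fin d → F,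
        euclProd (L v) (L v) - L v 0 * L v 0 = a * (euclProd v v - v 0 * v 0) := by
      intro v
      have hm := minkProd_self (L v)
      have hm2 := minkProd_self v
      rw [hM v, ← hab, hm2] at hm
      have he := hE v
      linear_combination he / 2 + hm / 2
    -- respects RestRel
    intro p q
    have key : ∀ w r : Fin d → F, RestRel (w + r) r ↔
        euclProd w w - w 0 * w 0 = 0 := by
      intro w r
      unfold RestRel
      rw [← spatial_zero_iff]
      constructor
      · intro h i hi; have := h i hi; simp only [Pi.add_apply] at this; linarith
      · intro h i hi; simp only [Pi.add_apply, h i hi, zero_add]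
    have hpq : RestRel p q ↔ euclProd (p - q) (p - q) - (p - q) 0 * (p - q) 0 = 0 := by
      have := key (p - q) q; rwa [sub_add_cancel] at this
    have hApq : RestRel (A p) (A q) ↔
        euclProd (A p - A q) (A p - A q) - (A p - A q) 0 * (A p - A q) 0 = 0 := by
      have := key (A p - A q) (A q); rwa [sub_add_cancel] at this
    rw [hpq, hApq, affine_reduce hA, hSc (p - q), mul_eq_zero]
    constructor
    · intro h; right; exact h
    · rintro (h | h); · exact absurd h ha0
      · exact h
  · rintro ⟨⟨⟨L, t, hA⟩, a, ha⟩, hR⟩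
    refine ⟨⟨⟨L, t, hA⟩, a, ha⟩, ⟨L, t, hA⟩, a, ?_⟩
    have hE : ∀ v, euclProd (L v) (L v) = a * euclProd v v := sim_reduce hA ha
    set e0 : Fin d → F := Pi.single 0 1 with he0
    have hbil : ∀ u v, euclProd (L u) (L v) = a * euclProd u v := by
      intro u v
      have h1 := hE (u + v)
      rw [map_add, euclProd_add_self, euclProd_add_self, hE u, hE v] at h1
      linear_combination h1 / 2
    -- L e0 is spatially zero
    have h00 : ∀ i, i ≠ 0 → L e0 i = 0 := by
      have hrest : RestRel e0 (0 : Fin d → F) := by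
        intro i hi
        simp [he0, Pi.single_eq_of_ne hi]
      have h2 := (hR _ _).mp hrest
      intro i hi
      have h3 := h2 i hi
      have h4 : L e0 i = A e0 i - A 0 i := by
        have := affine_reduce hA e0 0
        rw [sub_zero] at this
        rw [← this]; rfl
      rw [h4, h3, sub_self]
    have hE0 : euclProd e0 e0 = 1 := by simpa using euclProd_single_single (0 : Fin d) 0
    set l : F := L e0 0 with hl
    have hLe0 : euclProd (L e0) (L e0) = l * l := by
      rw [euclProd, ← Finset.add_sum_erase _ _ (Finset.mem_univ (0 : Fin d))]
      have : ∑ i ∈ Finset.univ.erase (0 : Fin d), L e0 i * L e0 i = 0 :=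
        Finset.sum_eq_zero fun i hi => by
          rw [h00 i (Finset.ne_of_mem_erase hi)]; ring
      rw [this, add_zero]
    have hl2 : l * l = a := by rw [← hLe0, hE e0, hE0, mul_one]
    have ha0 : a ≠ 0 := by
      intro h
      have := hE (L.symm e0)
      rw [LinearEquiv.apply_symm_apply, hE0, h, zero_mul] at this
      exact one_ne_zero this
    have hlne : l ≠ 0 := fun h => ha0 (by rw [← hl2, h, zero_mul])
    have hLv0 : ∀ v : Fin d → F, L v 0 = l * v 0 := by
      intro v
      have hb := hbil e0 v
      have hlhs : euclProd (L e0) (L v) = l * L v 0 := by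
        rw [euclProd, ← Finset.add_sum_erase _ _ (Finset.mem_univ (0 : Fin d))]
        have : ∑ i ∈ Finset.univ.erase (0 : Fin d), L e0 i * L v i = 0 :=
          Finset.sum_eq_zero fun i hi => by
            rw [h00 i (Finset.ne_of_mem_erase hi)]; ring
        rw [this, add_zero]
      have hrhs : euclProd e0 v = v 0 := euclProd_single_left 0 v
      rw [hlhs, hrhs] at hb
      have : l * L v 0 = l * (l * v 0) := by rw [hb, ← hl2]; ring
      exact mul_left_cancel₀ hlne this
    intro p q
    rw [sqDist, sqDist, affine_reduce hA, minkProd_self, minkProd_self (p - q),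
      hE (p - q), hLv0 (p - q)]
    linear_combination (2 * ((p - q) 0 * (p - q) 0)) * hl2


end Spacetimes
end

section
/- Every Galilean similarity respects the binary relation S, i.e., for every Galilean similarity A and all p, q ∈ F^d, p₁ = q₁ if and only if A(p)₁ = A(q)₁. -/
namespace Spacetimes

open Finset

variable {F : Type*} [Field F] [LinearOrder F] [IsStrictOrderedRing F] {d : ℕ}

/-- every Galilean similarity respects the relation `S`. -/
theorem galSim_respects_S [NeZero d] (hd : 2 ≤ d)
    (A : (Fin d → F) → (Fin d → F)) (hA : GalSim A) :
    ∀ p q : Fin d → F, p 0 = q 0 ↔ A p 0 = A q 0 := by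
  obtain ⟨⟨L, t, hL⟩, a, ha⟩ := hA
  have h0 : ∀ w : Fin d → F, w 0 = 0 → L w 0 = 0 := by
    intro w hw
    have h := (ha w 0 (by simp [hw])).1
    rw [hL, hL] at h
    simpa using h
  set c := L (Pi.single 0 1) 0 with hc
  have key : ∀ v : Fin d → F, L v 0 = v 0 * c := by
    intro v
    have hw : (v - v 0 • (Pi.single 0 1 : Fin d → F)) 0 = 0 := by simp
    have h := h0 _ hw
    rw [map_sub, map_smul] at h
    simp only [Pi.sub_apply, Pi.smul_apply, smul_eq_mul, ← hc] at h
    linarith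
  have hc0 : c ≠ 0 := by
    intro h
    obtain ⟨v, hv⟩ := L.surjective (Pi.single 0 1 : Fin d → F)
    have hk := key v
    rw [hv, h, mul_zero] at hk
    simpa using hk
  intro p q
  constructor
  · intro h; exact (ha p q h).1
  · intro h
    rw [hL, hL] at h
    have h2 : L p 0 = L q 0 := by
      have := h
      simp only [Pi.add_apply] at this
      linarith
    rw [key, key] at h2
    exact mul_right_cancel₀ hc0 h2

end Spacetimes
end

section
/- For an affine transformation A : F^d → F^d the following are equivalent: (i) A respects both lightlike relatedness λ and betweenness Bw; (ii) A respects both Minkowski congruence ≡_μ and betweenness Bw; (iii) A is a Poincaré similarity. (That is, the affine automorphisms of Relativistic spacetime ⟨F^d, λ, Bw⟩ and of Minkowski spacetime ⟨F^d, ≡_μ, Bw⟩ coincide and are exactly the Poincaré similarities.) -/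
namespace Spacetimes

open Finset

variable {F : Type*} [Field F] [LinearOrder F] [IsStrictOrderedRing F] {d : ℕ}

section AuxLemmas

variable [NeZero d]

lemma minkProd_eq_sum (p q : Fin d → F) :
    minkProd p q = ∑ i, (if i = (0 : Fin d) then (1:F) else -1) * (p i * q i) := by
  rw [minkProd,
    ← Finset.add_sum_erase _ (fun i => (if i = (0 : Fin d) then (1:F) else -1) * (p i * q i))
      (Finset.mem_univ (0 : Fin d))]
  rw [if_pos rfl, one_mul, sub_eq_add_neg]
  congr 1
  rw [← Finset.sum_neg_distrib]
  exact Finset.sum_congr rfl fun i hi => by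
    rw [if_neg (Finset.ne_of_mem_erase hi), neg_one_mul]

lemma minkProd_add_left (p p' q : Fin d → F) :
    minkProd (p + p') q = minkProd p q + minkProd p' q := by
  simp only [minkProd_eq_sum, Pi.add_apply, ← Finset.sum_add_distrib]
  exact Finset.sum_congr rfl fun i _ => by ring

lemma minkProd_add_right (p q q' : Fin d → F) :
    minkProd p (q + q') = minkProd p q + minkProd p q' := by
  simp only [minkProd_eq_sum, Pi.add_apply, ← Finset.sum_add_distrib]
  exact Finset.sum_congr rfl fun i _ => by ring

lemma minkProd_smul_left (c : F) (p q : Fin d → F) :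
    minkProd (c • p) q = c * minkProd p q := by
  simp only [minkProd_eq_sum, Pi.smul_apply, smul_eq_mul, Finset.mul_sum]
  exact Finset.sum_congr rfl fun i _ => by ring

lemma minkProd_smul_right (c : F) (p q : Fin d → F) :
    minkProd p (c • q) = c * minkProd p q := by
  simp only [minkProd_eq_sum, Pi.smul_apply, smul_eq_mul, Finset.mul_sum]
  exact Finset.sum_congr rfl fun i _ => by ring

lemma minkProd_sub_left (p p' q : Fin d → F) :
    minkProd (p - p') q = minkProd p q - minkProd p' q := by
  simp only [minkProd_eq_sum, Pi.sub_apply, ← Finset.sum_sub_distrib]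
  exact Finset.sum_congr rfl fun i _ => by ring

lemma minkProd_sub_right (p q q' : Fin d → F) :
    minkProd p (q - q') = minkProd p q - minkProd p q' := by
  simp only [minkProd_eq_sum, Pi.sub_apply, ← Finset.sum_sub_distrib]
  exact Finset.sum_congr rfl fun i _ => by ring

lemma minkProd_comm (p q : Fin d → F) : minkProd p q = minkProd q p := by
  simp only [minkProd_eq_sum]
  exact Finset.sum_congr rfl fun i _ => by ring

lemma minkProd_single (i j : Fin d) :
    minkProd (unitVec F i) (unitVec F j)
      = if i = j then (if i = 0 then (1:F) else -1) else 0 := by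
  rw [minkProd_eq_sum]
  rw [Finset.sum_eq_single i (fun k _ hk => by
      simp [unitVec, Pi.single_apply, hk]) (fun h => absurd (Finset.mem_univ i) h)]
  by_cases h : i = j <;> simp [unitVec, Pi.single_apply, h, eq_comm]

/-- The Minkowski product as a bilinear form. -/
def minkBilin (F : Type*) [Field F] [LinearOrder F] [IsStrictOrderedRing F] (d : ℕ) [NeZero d] :
    LinearMap.BilinForm F (Fin d → F) :=
  LinearMap.mk₂ F minkProd minkProd_add_left
    (fun c p q => by rw [minkProd_smul_left]; rfl)
    minkProd_add_right
    (fun c p q => by rw [minkProd_smul_right]; rfl)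

@[simp] lemma minkBilin_apply (p q : Fin d → F) : minkBilin F d p q = minkProd p q := rfl

lemma repr_sum (w : Fin d → F) : w = ∑ i, w i • unitVec F i := by
  funext k
  simp [unitVec, Finset.sum_apply, Pi.single_apply, mul_ite, Finset.sum_ite_eq]

lemma bilinform_expand (G : LinearMap.BilinForm F (Fin d → F)) (u v : Fin d → F) :
    G u v = ∑ i, ∑ j, u i * v j * G (unitVec F i) (unitVec F j) := by
  have h1 : G (∑ i, u i • unitVec F i) = ∑ i, u i • G (unitVec F i) := by
    rw [map_sum]
    exact Finset.sum_congr rfl fun i _ => map_smul G _ _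
  conv_lhs => rw [repr_sum u, repr_sum v]
  rw [h1, LinearMap.sum_apply]
  refine Finset.sum_congr rfl fun i _ => ?_
  rw [LinearMap.smul_apply, smul_eq_mul, map_sum, Finset.mul_sum]
  refine Finset.sum_congr rfl fun j _ => ?_
  rw [map_smul, smul_eq_mul]
  ring

lemma light_iff (p q : Fin d → F) : Light p q ↔ minkProd (p - q) (p - q) = 0 := by
  rw [Light, minkProd, sub_eq_zero]
  constructor <;> intro h <;>
    · simp only [Pi.sub_apply, ← pow_two] at *
      rw [h]

lemma minkProd_self_zero : minkProd (0 : Fin d → F) 0 = 0 := by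
  simp [minkProd]

/-- Core lemma: a linear bijection preserving the light cone scales the
Minkowski form by a constant. -/
lemma lightcone_scaling (hd : 2 ≤ d) (L : (Fin d → F) ≃ₗ[F] (Fin d → F))
    (hL : ∀ v : Fin d → F, minkProd v v = 0 ↔ minkProd (L v) (L v) = 0) :
    ∃ a : F, ∀ v, minkProd (L v) (L v) = a * minkProd v v := by
  classical
  refine ⟨minkProd (L (unitVec F 0)) (L (unitVec F (0 : Fin d))), fun v => ?_⟩
  have key1 : ∀ i : Fin d, i ≠ 0 →
      minkProd (L (unitVec F 0)) (L (unitVec F i)) = 0 ∧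
      minkProd (L (unitVec F i)) (L (unitVec F i))
        = -(minkProd (L (unitVec F 0)) (L (unitVec F (0 : Fin d)))) := by
    intro i hi
    have hQp : minkProd (unitVec F 0 + unitVec F i) (unitVec F 0 + unitVec F i) = 0 := by
      simp [minkProd_add_left, minkProd_add_right, minkProd_single, hi, Ne.symm hi]
    have hQm : minkProd (unitVec F 0 - unitVec F i) (unitVec F 0 - unitVec F i) = 0 := by
      simp [minkProd_sub_left, minkProd_sub_right, minkProd_single, hi, Ne.symm hi]
    have hBp := (hL _).mp hQp
    have hBm := (hL _).mp hQm
    rw [map_add] at hBp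
    rw [map_sub] at hBm
    rw [minkProd_add_left, minkProd_add_right, minkProd_add_right] at hBp
    rw [minkProd_sub_left, minkProd_sub_right, minkProd_sub_right] at hBm
    have hs : minkProd (L (unitVec F 0)) (L (unitVec F i))
        = minkProd (L (unitVec F i)) (L (unitVec F 0)) := minkProd_comm _ _
    constructor <;> linarith
  have key2 : ∀ i j : Fin d, i ≠ 0 → j ≠ 0 → i ≠ j →
      minkProd (L (unitVec F i)) (L (unitVec F j)) = 0 := by
    intro i j hi hj hij
    have hQ : minkProd ((5:F) • unitVec F 0 + (3:F) • unitVec F i + (4:F) • unitVec F j)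
        ((5:F) • unitVec F 0 + (3:F) • unitVec F i + (4:F) • unitVec F j) = 0 := by
      simp only [minkProd_add_left, minkProd_add_right, minkProd_smul_left,
        minkProd_smul_right, minkProd_single, hi, hj, hij, Ne.symm hi, Ne.symm hj,
        Ne.symm hij, if_pos rfl, if_neg, if_true, if_false, ite_true, ite_false]
      simp [hi, hj, hij, Ne.symm hi, Ne.symm hj, Ne.symm hij]
      all_goals ring
    have hB := (hL _).mp hQ
    rw [map_add, map_add, map_smul, map_smul, map_smul] at hB
    simp only [minkProd_add_left, minkProd_add_right, minkProd_smul_left,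
      minkProd_smul_right] at hB
    have h0i := key1 i hi
    have h0j := key1 j hj
    have hsij : minkProd (L (unitVec F i)) (L (unitVec F j))
        = minkProd (L (unitVec F j)) (L (unitVec F i)) := minkProd_comm _ _
    have hsi0 : minkProd (L (unitVec F i)) (L (unitVec F 0))
        = minkProd (L (unitVec F 0)) (L (unitVec F i)) := minkProd_comm _ _
    have hsj0 : minkProd (L (unitVec F j)) (L (unitVec F 0))
        = minkProd (L (unitVec F 0)) (L (unitVec F j)) := minkProd_comm _ _
    linarith [h0i.1, h0i.2, h0j.1, h0j.2]
  have hbasis : ∀ i j : Fin d, minkProd (L (unitVec F i)) (L (unitVec F j))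
      = minkProd (L (unitVec F 0)) (L (unitVec F (0 : Fin d)))
        * minkProd (unitVec F i) (unitVec F j) := by
    intro i j
    rcases eq_or_ne i j with rfl | hij
    · rcases eq_or_ne i 0 with rfl | hi
      · rw [minkProd_single]
        simp
      · rw [(key1 i hi).2, minkProd_single, if_pos rfl, if_neg hi]
        ring
    · rw [minkProd_single, if_neg hij, mul_zero]
      rcases eq_or_ne i 0 with rfl | hi
      · exact (key1 j (fun h => hij h.symm)).1
      · rcases eq_or_ne j 0 with rfl | hj
        · rw [minkProd_comm]
          exact (key1 i hi).1
        · exact key2 i j hi hj hij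
  have h2 : minkProd v v = ∑ i, ∑ j, v i * v j * minkProd (unitVec F i) (unitVec F j) := by
    have h := bilinform_expand (minkBilin F d) v v
    simpa using h
  have h3 : minkProd (L v) (L v)
      = ∑ i, ∑ j, v i * v j * minkProd (L (unitVec F i)) (L (unitVec F j)) := by
    have h := bilinform_expand ((minkBilin F d).compl₁₂ (L : (Fin d → F) →ₗ[F] (Fin d → F))
      (L : (Fin d → F) →ₗ[F] (Fin d → F))) v v
    simpa [LinearMap.compl₁₂_apply] using h
  rw [h3, h2, Finset.mul_sum]
  refine Finset.sum_congr rfl fun i _ => ?_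
  rw [Finset.mul_sum]
  refine Finset.sum_congr rfl fun j _ => ?_
  rw [hbasis i j]
  ring

lemma affine_respects_Bw {A : (Fin d → F) → (Fin d → F)} (hA : IsAffine A) :
    Respects3 A Bw := by
  obtain ⟨L, t, hAf⟩ := hA
  intro p q r
  constructor
  · rintro ⟨l, h0, h1, rfl⟩
    refine ⟨l, h0, h1, ?_⟩
    simp only [hAf, map_add, map_smul, map_sub]
    module
  · rintro ⟨l, h0, h1, heq⟩
    refine ⟨l, h0, h1, ?_⟩
    apply L.injective
    rw [map_add, map_smul, map_sub]
    rw [hAf, hAf, hAf] at heq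
    have h2 : L q = L p + t + l • (L r + t - (L p + t)) - t := by
      rw [← heq]; abel
    rw [h2]
    module

end AuxLemmas

/-- the affine automorphisms of Relativistic spacetime
`⟨F^d, λ, Bw⟩` and of Minkowski spacetime `⟨F^d, ≡_μ, Bw⟩` coincide, and
they are exactly the Poincaré similarities. -/
theorem affAut_rel_eq_affAut_mink_eq_poiSim [NeZero d] (hd : 2 ≤ d)
    (A : (Fin d → F) → (Fin d → F)) (hA : IsAffine A) :
    List.TFAE [Respects2 A Light ∧ Respects3 A Bw,
               Respects4 A CongM ∧ Respects3 A Bw,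
               PoiSim A] := by
  obtain ⟨L, t, hAf⟩ := hA
  have hBw : Respects3 A Bw := affine_respects_Bw ⟨L, t, hAf⟩
  have hdiff : ∀ p q, A p - A q = L (p - q) := by
    intro p q
    rw [hAf, hAf, map_sub]
    abel
  tfae_have 1 → 3
  · rintro ⟨hLight, -⟩
    have hL : ∀ v : Fin d → F, minkProd v v = 0 ↔ minkProd (L v) (L v) = 0 := by
      intro v
      have h := hLight v 0
      rw [light_iff, light_iff, sub_zero, hdiff, sub_zero] at h
      exact h
    obtain ⟨a, ha⟩ := lightcone_scaling hd L hL
    refine ⟨⟨L, t, hAf⟩, a, fun p q => ?_⟩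
    rw [sqDist, sqDist, hdiff]
    exact ha _
  tfae_have 3 → 2
  · rintro ⟨-, a, ha⟩
    have hane : a ≠ 0 := by
      intro h0
      have h := ha (L.symm (unitVec F 0)) 0
      rw [h0, zero_mul, sqDist, hdiff, sub_zero, L.apply_symm_apply] at h
      have h1 : minkProd (unitVec F 0) (unitVec F (0 : Fin d)) = 1 := by
        rw [minkProd_single]; simp
      rw [h1] at h
      exact one_ne_zero h
    refine ⟨fun p q r s => ?_, hBw⟩
    unfold CongM
    rw [ha p q, ha r s]
    exact ⟨fun h => by rw [h], fun h => mul_left_cancel₀ hane h⟩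
  tfae_have 2 → 1
  · rintro ⟨hC, -⟩
    refine ⟨fun p q => ?_, hBw⟩
    have hlq : ∀ x y : Fin d → F, Light x y ↔ CongM x y y y := by
      intro x y
      rw [light_iff, CongM, sqDist, sqDist, sub_self, minkProd_self_zero]
    rw [hlq, hlq, hC p q q q]
  tfae_finish

end Spacetimes
end

section
/- An affine transformation A : F^d → F^d respects both congruence on simultaneity ≡_S and betweenness Bw if and only if A is a Galilean similarity. (That is, the affine automorphisms of Galilean spacetime ⟨F^d, ≡_S, Bw⟩ are exactly the Galilean similarities.) -/
namespace Spacetimes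

open Finset

variable {F : Type*} [Field F] [LinearOrder F] [IsStrictOrderedRing F] {d : ℕ}

section AuxLemmas

lemma euclProd_comm (p q : Fin d → F) : euclProd p q = euclProd q p := by
  simp [euclProd, mul_comm]

lemma euclProd_add_left (p q r : Fin d → F) :
    euclProd (p + q) r = euclProd p r + euclProd q r := by
  simp [euclProd, add_mul, Finset.sum_add_distrib]

lemma euclProd_sub_left (p q r : Fin d → F) :
    euclProd (p - q) r = euclProd p r - euclProd q r := by
  simp [euclProd, sub_mul, Finset.sum_sub_distrib]

lemma euclProd_add_right (p q r : Fin d → F) :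
    euclProd p (q + r) = euclProd p q + euclProd p r := by
  rw [euclProd_comm, euclProd_add_left, euclProd_comm q p, euclProd_comm r p]

lemma euclProd_sub_right (p q r : Fin d → F) :
    euclProd p (q - r) = euclProd p q - euclProd p r := by
  rw [euclProd_comm, euclProd_sub_left, euclProd_comm q p, euclProd_comm r p]

lemma euclProd_smul_left (c : F) (p r : Fin d → F) :
    euclProd (c • p) r = c * euclProd p r := by
  simp [euclProd, Finset.mul_sum, mul_assoc]

lemma euclProd_smul_right (c : F) (p r : Fin d → F) :
    euclProd p (c • r) = c * euclProd p r := by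
  rw [euclProd_comm, euclProd_smul_left, euclProd_comm]

lemma euclProd_sum_left {ι : Type*} (s : Finset ι) (f : ι → Fin d → F) (w : Fin d → F) :
    euclProd (∑ i ∈ s, f i) w = ∑ i ∈ s, euclProd (f i) w := by
  simp only [euclProd, Finset.sum_apply, Finset.sum_mul]
  exact Finset.sum_comm

lemma euclProd_sum_right {ι : Type*} (s : Finset ι) (f : ι → Fin d → F) (w : Fin d → F) :
    euclProd w (∑ i ∈ s, f i) = ∑ i ∈ s, euclProd w (f i) := by
  rw [euclProd_comm, euclProd_sum_left]
  exact Finset.sum_congr rfl fun i _ => euclProd_comm _ _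

lemma euclProd_single (i j : Fin d) :
    euclProd (unitVec F i) (unitVec F j) = if i = j then 1 else 0 := by
  by_cases h : i = j
  · subst h
    simp [euclProd, unitVec, Pi.single_apply]
  · simp only [euclProd, unitVec, Pi.single_apply, if_neg h]
    rw [Finset.sum_eq_zero]
    intro k _
    by_cases hk : k = i
    · subst hk; simp [h]
    · simp [hk]

lemma pi_decomp (v : Fin d → F) : v = ∑ i, v i • unitVec F i := by
  funext k
  simp [unitVec, Pi.single_apply, Finset.sum_apply]

lemma key_quad [NeZero d] (L : (Fin d → F) ≃ₗ[F] (Fin d → F)) (a : F)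
    (hBa : ∀ i : Fin d, i ≠ 0 → euclProd (L (unitVec F i)) (L (unitVec F i)) = a)
    (hB0 : ∀ i j : Fin d, i ≠ 0 → j ≠ 0 → i ≠ j →
      euclProd (L (unitVec F i)) (L (unitVec F j)) = 0)
    (v : Fin d → F) (hv : v 0 = 0) :
    euclProd (L v) (L v) = a * euclProd v v := by
  have hdec : (L v : Fin d → F) = ∑ i, v i • L (unitVec F i) := by
    conv_lhs => rw [pi_decomp v]
    rw [map_sum]
    exact Finset.sum_congr rfl fun i _ => L.map_smul _ _
  rw [hdec, euclProd_sum_left]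
  have hterm : ∀ i : Fin d,
      euclProd (v i • L (unitVec F i)) (∑ j, v j • L (unitVec F j)) = v i * v i * a := by
    intro i
    rw [euclProd_smul_left, euclProd_sum_right]
    by_cases hi : i = 0
    · subst hi; rw [hv]; ring
    · rw [Finset.sum_eq_single i]
      · rw [euclProd_smul_right, hBa i hi]; ring
      · intro j _ hj
        rw [euclProd_smul_right]
        by_cases hj0 : j = 0
        · subst hj0; rw [hv]; ring
        · rw [hB0 i j hi hj0 (fun h => hj h.symm)]; ring
      · intro h; exact absurd (Finset.mem_univ i) h
  rw [Finset.sum_congr rfl (fun i _ => hterm i)]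
  simp only [euclProd, Finset.mul_sum]
  exact Finset.sum_congr rfl fun i _ => by ring

lemma bw_affine (L : (Fin d → F) ≃ₗ[F] (Fin d → F)) (t : Fin d → F) (p q r : Fin d → F) :
    Bw p q r ↔ Bw (L p + t) (L q + t) (L r + t) := by
  constructor
  · rintro ⟨l, h0, h1, rfl⟩
    refine ⟨l, h0, h1, ?_⟩
    rw [map_add, map_smul, map_sub]
    funext i
    simp only [Pi.add_apply, Pi.sub_apply, Pi.smul_apply, smul_eq_mul]
    ring
  · rintro ⟨l, h0, h1, heq⟩
    refine ⟨l, h0, h1, ?_⟩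
    apply L.injective
    rw [map_add, map_smul, map_sub]
    funext i
    have := congrFun heq i
    simp only [Pi.add_apply, Pi.sub_apply, Pi.smul_apply, smul_eq_mul] at this ⊢
    linear_combination this

end AuxLemmas

/-- the affine automorphisms of Galilean spacetime
`⟨F^d, ≡_S, Bw⟩` are exactly the Galilean similarities. -/
theorem affAut_gal_eq_galSim [NeZero d] (hd : 2 ≤ d)
    (A : (Fin d → F) → (Fin d → F)) (hA : IsAffine A) :
    (Respects4 A CongS ∧ Respects3 A Bw) ↔ GalSim A := by
  obtain ⟨L, t, hL⟩ := hA
  have h1 : (1 : Fin d) ≠ 0 := by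
    intro h
    rw [Fin.one_eq_zero_iff] at h
    omega
  have hAK : ∀ p q : Fin d → F, A p - A q = L (p - q) := by
    intro p q; rw [hL p, hL q, map_sub]; abel
  have hsq : ∀ p q : Fin d → F,
      sqDist euclProd (A p) (A q) = euclProd (L (p - q)) (L (p - q)) := by
    intro p q
    show euclProd (A p - A q) (A p - A q) = _
    rw [hAK]
  constructor
  · rintro ⟨hC, -⟩
    have hS : ∀ p q : Fin d → F, p 0 = q 0 ↔ A p 0 = A q 0 := by
      intro p q
      have h := hC p q p q
      simp only [CongS, CongE, SimRel] at h
      constructor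
      · intro hh; exact (h.mp ⟨trivial, hh, hh⟩).2.1
      · intro hh; exact (h.mpr ⟨trivial, hh, hh⟩).2.1
    have key : ∀ u v : Fin d → F, u 0 = 0 → v 0 = 0 → euclProd u u = euclProd v v →
        euclProd (L u) (L u) = euclProd (L v) (L v) := by
      intro u v hu hv hQ
      have hcs : CongS u 0 v 0 := by
        refine ⟨?_, ?_, ?_⟩
        · simp only [CongE, sqDist, sub_zero]; exact hQ
        · simpa [SimRel] using hu
        · simpa [SimRel] using hv
      have hce := ((hC u 0 v 0).mp hcs).1
      simp only [CongE] at hce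
      rw [hsq u 0, hsq v 0, sub_zero, sub_zero] at hce
      exact hce
    have huv0 : ∀ i : Fin d, i ≠ 0 → (unitVec F i : Fin d → F) 0 = 0 := by
      intro i hi
      simp [unitVec, Pi.single_eq_of_ne (Ne.symm hi)]
    set a := euclProd (L (unitVec F 1)) (L (unitVec F 1)) with ha
    have hBa : ∀ i : Fin d, i ≠ 0 → euclProd (L (unitVec F i)) (L (unitVec F i)) = a := by
      intro i hi
      refine key _ _ (huv0 i hi) (huv0 1 h1) ?_
      rw [euclProd_single, euclProd_single, if_pos rfl, if_pos rfl]
    have hB0 : ∀ i j : Fin d, i ≠ 0 → j ≠ 0 → i ≠ j →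
        euclProd (L (unitVec F i)) (L (unitVec F j)) = 0 := by
      intro i j hi hj hij
      have hkey := key (unitVec F i + unitVec F j) (unitVec F i - unitVec F j)
        (by simp [huv0 i hi, huv0 j hj]) (by simp [huv0 i hi, huv0 j hj]) ?_
      · rw [map_add, map_sub] at hkey
        rw [euclProd_add_left, euclProd_add_right, euclProd_add_right,
            euclProd_sub_left, euclProd_sub_right, euclProd_sub_right] at hkey
        have hsymm := euclProd_comm (L (unitVec F i)) (L (unitVec F j))
        linarith
      · rw [euclProd_add_left, euclProd_add_right, euclProd_add_right,
            euclProd_sub_left, euclProd_sub_right, euclProd_sub_right,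
            euclProd_single, euclProd_single i j, euclProd_single j i, euclProd_single j j,
            if_pos rfl, if_pos rfl, if_neg hij, if_neg (Ne.symm hij)]
        ring
    refine ⟨⟨L, t, hL⟩, a, ?_⟩
    intro p q hpq
    refine ⟨(hS p q).mp hpq, ?_⟩
    have h0 : (p - q) 0 = 0 := by simp [Pi.sub_apply, sub_eq_zero, hpq]
    rw [hsq p q, key_quad L a hBa hB0 (p - q) h0]
    rfl
  · rintro ⟨-, a, hGal⟩
    have hLH : ∀ v : Fin d → F, v 0 = 0 → L v 0 = 0 := by
      intro v hv
      have h := (hGal v 0 (by simpa using hv)).1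
      rw [hL v, hL 0, map_zero] at h
      have h' : L v 0 + t 0 = t 0 := by simpa using h
      linarith
    have hLH' : ∀ v : Fin d → F, L v 0 = 0 → v 0 = 0 := by
      intro v hv
      by_contra hv0
      have hLu : L (L.symm (unitVec F 0)) 0 = 1 := by
        rw [L.apply_symm_apply]; simp [unitVec]
      have hw : (L.symm (unitVec F 0) - (L.symm (unitVec F 0) 0 / v 0) • v) 0 = 0 := by
        simp only [Pi.sub_apply, Pi.smul_apply, smul_eq_mul]
        rw [div_mul_cancel₀ _ hv0, sub_self]
      have hcontra := hLH _ hw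
      rw [map_sub, map_smul] at hcontra
      simp only [Pi.sub_apply, Pi.smul_apply, smul_eq_mul] at hcontra
      rw [hLu, hv] at hcontra
      simp at hcontra
    have hane : a ≠ 0 := by
      intro ha0
      have hv0 : (unitVec F (1 : Fin d) : Fin d → F) 0 = 0 := by
        simp [unitVec, Pi.single_eq_of_ne (Ne.symm h1)]
      have h := (hGal (unitVec F (1 : Fin d)) 0 (by simpa using hv0)).2
      rw [ha0, zero_mul, hsq, sub_zero] at h
      have hz : L (unitVec F (1 : Fin d)) = 0 := euclProd_self_eq_zero h
      have h0 : unitVec F (1 : Fin d) = 0 := by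
        apply L.injective; rw [hz, map_zero]
      have h11 : (unitVec F (1 : Fin d) : Fin d → F) 1 = 1 := by simp [unitVec]
      rw [h0] at h11
      simp at h11
    have hSim2 : ∀ p q : Fin d → F, p 0 = q 0 ↔ A p 0 = A q 0 := by
      intro p q
      constructor
      · intro h; exact (hGal p q h).1
      · intro h
        have hz : L (p - q) 0 = 0 := by
          have := congrFun (hAK p q) 0
          simp only [Pi.sub_apply] at this
          rw [← this, h, sub_self]
        have := hLH' _ hz
        simpa [Pi.sub_apply, sub_eq_zero] using this
    constructor
    · intro p q r s
      simp only [CongS, CongE, SimRel]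
      constructor
      · rintro ⟨hE, hpq, hrs⟩
        refine ⟨?_, (hSim2 p q).mp hpq, (hSim2 r s).mp hrs⟩
        rw [(hGal p q hpq).2, (hGal r s hrs).2, hE]
      · rintro ⟨hE, hpq, hrs⟩
        have hpq' := (hSim2 p q).mpr hpq
        have hrs' := (hSim2 r s).mpr hrs
        refine ⟨?_, hpq', hrs'⟩
        have h : a * sqDist euclProd p q = a * sqDist euclProd r s := by
          rw [← (hGal p q hpq').2, ← (hGal r s hrs').2]; exact hE
        exact mul_left_cancel₀ hane h
    · intro p q r
      rw [hL p, hL q, hL r]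
      exact bw_affine L t p q r


end Spacetimes
end
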